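/- Let k ≥ 2 be even and let G_k be the graph on [k] × [k] defined from the grid P_k □ P_k with added edges (0,j)–(k−1,k−j−1) and (j,0)–(k−j−1,k−1) for j ∈ [k]. Then the independence number of G_k equals (k² − k)/2. -/

import Mathlib

/-- One-directional edge relation of the projective grid graph `G_k`. -/
def gkRel (k : ℕ) (u v : Fin k × Fin k) : Prop :=
  (u.1 = v.1 ∧ (u.2 : ℕ) + 1 = (v.2 : ℕ)) ∨
  (u.2 = v.2 ∧ (u.1 : ℕ) + 1 = (v.1 : ℕ)) ∨
  ((u.1 : ℕ) = 0 ∧ (v.1 : ℕ) = k - 1 ∧ (u.2 : ℕ) + (v.2 : ℕ) = k - 1) ∨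
  ((u.2 : ℕ) = 0 ∧ (v.2 : ℕ) = k - 1 ∧ (u.1 : ℕ) + (v.1 : ℕ) = k - 1)

/-- The projective quadrangulation `G_k`: the grid `P_k □ P_k` with added edges
`(0,j)–(k−1,k−j−1)` and `(j,0)–(k−j−1,k−1)`. -/
def Gk (k : ℕ) : SimpleGraph (Fin k × Fin k) where
  Adj u v := u ≠ v ∧ (gkRel k u v ∨ gkRel k v u)
  symm := by
    constructor
    intro u v h
    exact ⟨h.1.symm, h.2.symm⟩
  loopless := by
    constructor
    intro u h
    exact h.1 rfl

instance (k : ℕ) : DecidableRel (Gk k).Adj := by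
  intro u v
  unfold Gk gkRel
  infer_instance


lemma pathA (m : ℕ) (S : Finset ℕ) (hsub : ∀ j ∈ S, j < 2*m)
    (hnc : ∀ j : ℕ, ¬(j ∈ S ∧ j+1 ∈ S)) : S.card ≤ m := by
  have hinj : Set.InjOn (· / 2) S := by
    intro a ha b hb hab
    by_contra hne
    have h1 : a = b + 1 ∨ b = a + 1 := by simp only at hab; omega
    rcases h1 with h | h
    · exact hnc b ⟨hb, h ▸ ha⟩
    · exact hnc a ⟨ha, h ▸ hb⟩
  have h1 : S.card = (S.image (· / 2)).card := (Finset.card_image_of_injOn hinj).symm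
  have h2 : S.image (· / 2) ⊆ Finset.range m := by
    intro t ht
    simp only [Finset.mem_image] at ht
    obtain ⟨j, hj, rfl⟩ := ht
    have := hsub j hj
    simp only [Finset.mem_range]
    omega
  calc S.card = _ := h1
    _ ≤ (Finset.range m).card := Finset.card_le_card h2
    _ = m := Finset.card_range m

lemma pathB (m : ℕ) (S : Finset ℕ) (hsub : ∀ j ∈ S, j < 2*m)
    (hnc : ∀ j : ℕ, ¬(j ∈ S ∧ j+1 ∈ S)) (hcard : S.card = m) :
    ∀ t < m, 2*t ∈ S ∨ 2*t+1 ∈ S := by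
  have hinj : Set.InjOn (· / 2) S := by
    intro a ha b hb hab
    by_contra hne
    have h1 : a = b + 1 ∨ b = a + 1 := by simp only at hab; omega
    rcases h1 with h | h
    · exact hnc b ⟨hb, h ▸ ha⟩
    · exact hnc a ⟨ha, h ▸ hb⟩
  have h2 : S.image (· / 2) ⊆ Finset.range m := by
    intro t ht
    simp only [Finset.mem_image] at ht
    obtain ⟨j, hj, rfl⟩ := ht
    have := hsub j hj
    simp only [Finset.mem_range]
    omega
  have heq : S.image (· / 2) = Finset.range m := by
    apply Finset.eq_of_subset_of_card_le h2
    rw [Finset.card_image_of_injOn hinj, hcard, Finset.card_range]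
  intro t ht
  have : t ∈ S.image (· / 2) := by rw [heq]; simpa using ht
  simp only [Finset.mem_image] at this
  obtain ⟨j, hj, hjt⟩ := this
  have : j = 2*t ∨ j = 2*t+1 := by omega
  rcases this with rfl | rfl
  · exact Or.inl hj
  · exact Or.inr hj


lemma pathOdd (m : ℕ) (S : Finset ℕ) (hsub : ∀ j ∈ S, j < 2*m)
    (hnc : ∀ j : ℕ, ¬(j ∈ S ∧ j+1 ∈ S)) (hcard : S.card = m)
    (h0 : 0 ∉ S) : ∀ j < 2*m, (j ∈ S ↔ j % 2 = 1) := by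
  have key : ∀ t, t < m → (2*t+1 ∈ S ∧ 2*t ∉ S) := by
    intro t
    induction t with
    | zero =>
      intro ht
      refine ⟨?_, by simpa using h0⟩
      rcases pathB m S hsub hnc hcard 0 ht with h | h
      · exact absurd h (by simpa using h0)
      · simpa using h
    | succ t ih =>
      intro ht
      obtain ⟨h1, -⟩ := ih (by omega)
      have h2 : 2*t+1+1 ∉ S := fun h => hnc (2*t+1) ⟨h1, h⟩
      have h2' : 2*(t+1) ∉ S := by
        have he : 2*(t+1) = 2*t+1+1 := by omega
        rw [he]; exact h2
      refine ⟨?_, h2'⟩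
      rcases pathB m S hsub hnc hcard (t+1) ht with h | h
      · exact absurd h h2'
      · exact h
  intro j hj
  constructor
  · intro hjS
    by_contra hodd
    have he : j = 2 * (j/2) := by omega
    have := (key (j/2) (by omega)).2
    rw [← he] at this
    exact this hjS
  · intro hodd
    have he : j = 2 * (j/2) + 1 := by omega
    have := (key (j/2) (by omega)).1
    rwa [← he] at this

lemma pathEven (m : ℕ) (S : Finset ℕ) (hsub : ∀ j ∈ S, j < 2*m)
    (hnc : ∀ j : ℕ, ¬(j ∈ S ∧ j+1 ∈ S)) (hcard : S.card = m) (hm : 1 ≤ m)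
    (h1 : 2*m-1 ∉ S) : ∀ j < 2*m, (j ∈ S ↔ j % 2 = 0) := by
  have key : ∀ t, t < m → (2*(m-1-t) ∈ S ∧ 2*(m-1-t)+1 ∉ S) := by
    intro t
    induction t with
    | zero =>
      intro ht
      have ho : 2*(m-1-0)+1 ∉ S := by
        convert h1 using 2; omega
      refine ⟨?_, ho⟩
      rcases pathB m S hsub hnc hcard (m-1-0) (by omega) with h | h
      · exact h
      · exact absurd h ho
    | succ t ih =>
      intro ht
      obtain ⟨he, -⟩ := ih (by omega)
      have hq : 2*(m-1-(t+1))+1+1 = 2*(m-1-t) := by omega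
      have ho : 2*(m-1-(t+1))+1 ∉ S := fun h => hnc _ ⟨h, hq ▸ he⟩
      refine ⟨?_, ho⟩
      rcases pathB m S hsub hnc hcard (m-1-(t+1)) (by omega) with h | h
      · exact h
      · exact absurd h ho
  intro j hj
  constructor
  · intro hjS
    by_contra heven
    have he : j = 2 * (m-1-(m-1-j/2)) + 1 := by omega
    have := (key (m-1-j/2) (by omega)).2
    rw [← he] at this
    exact this hjS
  · intro heven
    have he : j = 2 * (m-1-(m-1-j/2)) := by omega
    have := (key (m-1-j/2) (by omega)).1
    rwa [← he] at this


lemma many_full {k m : ℕ} (hm : 1 ≤ m) (hk : k = 2*m) (a : Fin k → ℕ)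
    (hb : ∀ i, a i ≤ m) (hs : 2*m*m - m + 1 ≤ ∑ i, a i) :
    m + 1 ≤ (Finset.univ.filter (fun i => a i = m)).card := by
  classical
  set F := Finset.univ.filter (fun i => a i = m) with hF
  set c := F.card with hc
  have hsplit : ∑ i, a i = (∑ i ∈ F, a i) + ∑ i ∈ Finset.univ.filter (fun i => ¬(a i = m)), a i :=
    (Finset.sum_filter_add_sum_filter_not _ _ _).symm
  have h1 : ∑ i ∈ F, a i ≤ c * m := by
    calc ∑ i ∈ F, a i ≤ ∑ _i ∈ F, m := Finset.sum_le_sum (fun i _ => hb i)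
      _ = c * m := by rw [Finset.sum_const, smul_eq_mul]
  set G := Finset.univ.filter (fun i => ¬(a i = m)) with hG
  set d := G.card with hd
  have h2 : ∑ i ∈ G, a i ≤ d * (m - 1) := by
    calc ∑ i ∈ G, a i ≤ ∑ _i ∈ G, (m-1) := by
          apply Finset.sum_le_sum
          intro i hi
          simp only [hG, Finset.mem_filter] at hi
          have := hb i
          omega
      _ = d * (m-1) := by rw [Finset.sum_const, smul_eq_mul]
  have hcd : c + d = 2 * m := by
    rw [hc, hd, hF, hG, Finset.card_filter_add_card_filter_not]
    simp [hk]
  have hident : c * m + d * (m - 1) + d = (c + d) * m := by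
    obtain ⟨p, rfl⟩ : ∃ p, m = p + 1 := ⟨m - 1, by omega⟩
    simp only [Nat.add_sub_cancel]
    ring
  have htot : 2*m*m - m + 1 ≤ c * m + d * (m-1) := by omega
  -- from identity: c*m + d*(m-1) = 2m*m - d
  have : c * m + d * (m - 1) = 2 * m * m - d := by
    rw [hcd] at hident; omega
  omega

variable {k : ℕ}

def rowF (I : Finset (Fin k × Fin k)) (i : Fin k) : Finset ℕ :=
  (I.filter (fun v => v.1 = i)).image (fun v => (v.2 : ℕ))

def colF (I : Finset (Fin k × Fin k)) (j : Fin k) : Finset ℕ :=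
  (I.filter (fun v => v.2 = j)).image (fun v => (v.1 : ℕ))

lemma mem_rowF {I : Finset (Fin k × Fin k)} {i : Fin k} (jf : Fin k) :
    (jf : ℕ) ∈ rowF I i ↔ (i, jf) ∈ I := by
  simp only [rowF, Finset.mem_image, Finset.mem_filter]
  constructor
  · rintro ⟨v, ⟨hvI, hv1⟩, hv2⟩
    have : v = (i, jf) := Prod.ext hv1 (Fin.ext hv2)
    rwa [← this]
  · intro h
    exact ⟨(i, jf), ⟨h, rfl⟩, rfl⟩

lemma mem_colF {I : Finset (Fin k × Fin k)} {j : Fin k} (ifn : Fin k) :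
    (ifn : ℕ) ∈ colF I j ↔ (ifn, j) ∈ I := by
  simp only [colF, Finset.mem_image, Finset.mem_filter]
  constructor
  · rintro ⟨v, ⟨hvI, hv2⟩, hv1⟩
    have : v = (ifn, j) := Prod.ext (Fin.ext hv1) hv2
    rwa [← this]
  · intro h
    exact ⟨(ifn, j), ⟨h, rfl⟩, rfl⟩

lemma rowF_sub {I : Finset (Fin k × Fin k)} {i : Fin k} :
    ∀ j ∈ rowF I i, j < k := by
  intro j hj
  simp only [rowF, Finset.mem_image] at hj
  obtain ⟨v, -, rfl⟩ := hj
  exact v.2.isLt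

lemma colF_sub {I : Finset (Fin k × Fin k)} {j : Fin k} :
    ∀ i ∈ colF I j, i < k := by
  intro i hi
  simp only [colF, Finset.mem_image] at hi
  obtain ⟨v, -, rfl⟩ := hi
  exact v.1.isLt

lemma rowF_card {I : Finset (Fin k × Fin k)} {i : Fin k} :
    (rowF I i).card = (I.filter (fun v => v.1 = i)).card := by
  apply Finset.card_image_of_injOn
  intro u hu v hv h
  simp only [Finset.coe_filter, Set.mem_setOf_eq] at hu hv
  exact Prod.ext (hu.2.trans hv.2.symm) (Fin.ext h)

lemma colF_card {I : Finset (Fin k × Fin k)} {j : Fin k} :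
    (colF I j).card = (I.filter (fun v => v.2 = j)).card := by
  apply Finset.card_image_of_injOn
  intro u hu v hv h
  simp only [Finset.coe_filter, Set.mem_setOf_eq] at hu hv
  exact Prod.ext (Fin.ext h) (hu.2.trans hv.2.symm)

lemma rowF_nc {I : Finset (Fin k × Fin k)}
    (hI : ∀ u ∈ I, ∀ v ∈ I, ¬(Gk k).Adj u v) (i : Fin k) :
    ∀ j : ℕ, ¬(j ∈ rowF I i ∧ j + 1 ∈ rowF I i) := by
  rintro j ⟨h1, h2⟩
  have hjk : j + 1 < k := rowF_sub _ h2
  have hm1 : ((⟨j, by omega⟩ : Fin k) : ℕ) ∈ rowF I i := h1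
  have hm2 : ((⟨j+1, hjk⟩ : Fin k) : ℕ) ∈ rowF I i := h2
  rw [mem_rowF] at hm1 hm2
  refine hI _ hm1 _ hm2 ⟨?_, Or.inl (Or.inl ⟨rfl, rfl⟩)⟩
  simp only [ne_eq, Prod.mk.injEq, Fin.mk.injEq]
  rintro ⟨-, h⟩
  omega

lemma colF_nc {I : Finset (Fin k × Fin k)}
    (hI : ∀ u ∈ I, ∀ v ∈ I, ¬(Gk k).Adj u v) (j : Fin k) :
    ∀ i : ℕ, ¬(i ∈ colF I j ∧ i + 1 ∈ colF I j) := by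
  rintro i ⟨h1, h2⟩
  have hik : i + 1 < k := colF_sub _ h2
  have hm1 : ((⟨i, by omega⟩ : Fin k) : ℕ) ∈ colF I j := h1
  have hm2 : ((⟨i+1, hik⟩ : Fin k) : ℕ) ∈ colF I j := h2
  rw [mem_colF] at hm1 hm2
  refine hI _ hm1 _ hm2 ⟨?_, Or.inl (Or.inr (Or.inl ⟨rfl, rfl⟩))⟩
  simp only [ne_eq, Prod.mk.injEq, Fin.mk.injEq]
  rintro ⟨h, -⟩
  omega

lemma upper {m : ℕ} (hm : 1 ≤ m) (hk : k = 2*m) (I : Finset (Fin k × Fin k))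
    (hI : ∀ u ∈ I, ∀ v ∈ I, ¬(Gk k).Adj u v) : I.card ≤ 2*m*m - m := by
  classical
  by_contra hgt
  push_neg at hgt
  have hgt' : 2*m*m - m + 1 ≤ I.card := hgt
  have h0k : (0:ℕ) < k := by omega
  have hlk : 2*m-1 < k := by omega
  set P0 : Fin k := ⟨0, h0k⟩ with hP0
  set PL : Fin k := ⟨2*m-1, hlk⟩ with hPL
  have hsub' : ∀ (i : Fin k), ∀ j ∈ rowF I i, j < 2*m := fun i j hj => hk ▸ rowF_sub j hj
  have hsubc' : ∀ (j : Fin k), ∀ i ∈ colF I j, i < 2*m := fun j i hi => hk ▸ colF_sub i hi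
  -- row cards
  have hrowle : ∀ i : Fin k, (rowF I i).card ≤ m :=
    fun i => pathA m _ (hsub' i) (rowF_nc hI i)
  have hcolle : ∀ j : Fin k, (colF I j).card ≤ m :=
    fun j => pathA m _ (hsubc' j) (colF_nc hI j)
  have hsumrow : I.card = ∑ i : Fin k, (rowF I (i : Fin k)).card := by
    rw [Finset.card_eq_sum_card_fiberwise (f := fun v => v.1) (t := Finset.univ)
      (fun x _ => Finset.mem_univ _)]
    exact Finset.sum_congr rfl (fun i _ => rowF_card.symm)
  have hsumcol : I.card = ∑ j : Fin k, (colF I (j : Fin k)).card := by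
    rw [Finset.card_eq_sum_card_fiberwise (f := fun v => v.2) (t := Finset.univ)
      (fun x _ => Finset.mem_univ _)]
    exact Finset.sum_congr rfl (fun j _ => colF_card.symm)
  -- many full rows / columns
  have hFrow : m + 1 ≤ (Finset.univ.filter (fun i : Fin k => (rowF I i).card = m)).card :=
    many_full hm hk _ hrowle (by omega)
  have hFcol : m + 1 ≤ (Finset.univ.filter (fun j : Fin k => (colF I j).card = m)).card :=
    many_full hm hk _ hcolle (by omega)
  set Frow := Finset.univ.filter (fun i : Fin k => (rowF I i).card = m) with hFrowdef
  set Fcol := Finset.univ.filter (fun j : Fin k => (colF I j).card = m) with hFcoldef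
  -- adjacent pair of full rows
  have hvalinj : ∀ (s : Finset (Fin k)), (s.image Fin.val).card = s.card :=
    fun s => Finset.card_image_of_injective s Fin.val_injective
  have hexadj : ∃ i : ℕ, i ∈ Frow.image Fin.val ∧ i + 1 ∈ Frow.image Fin.val := by
    by_contra hno
    push_neg at hno
    have : (Frow.image Fin.val).card ≤ m := by
      apply pathA m
      · intro j hj
        simp only [Finset.mem_image] at hj
        obtain ⟨x, -, rfl⟩ := hj
        omega
      · intro j hj
        exact hno j hj.1 hj.2
    rw [hvalinj] at this
    omega
  obtain ⟨ia, hia1, hia2⟩ := hexadj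
  simp only [Finset.mem_image] at hia1 hia2
  obtain ⟨iF, hiF, hiFv⟩ := hia1
  obtain ⟨iF', hiF', hiFv'⟩ := hia2
  simp only [hFrowdef, Finset.mem_filter] at hiF hiF'
  -- existence of a full all-odd row A
  have hA : ∃ A : Fin k, ∀ j < 2*m, (j ∈ rowF I A ↔ j % 2 = 1) := by
    by_cases hall : ∃ A : Fin k, (rowF I A).card = m ∧ (0:ℕ) ∉ rowF I A
    · obtain ⟨A, hAc, hA0⟩ := hall
      exact ⟨A, pathOdd m _ (hsub' A) (rowF_nc hI A) hAc hA0⟩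
    · exfalso
      push_neg at hall
      have h1 : (0:ℕ) ∈ rowF I iF := hall iF hiF.2
      have h2 : (0:ℕ) ∈ rowF I iF' := hall iF' hiF'.2
      have hm1 : (iF, P0) ∈ I := (mem_rowF _).mp h1
      have hm2 : (iF', P0) ∈ I := (mem_rowF _).mp h2
      refine hI _ hm1 _ hm2 ⟨?_,
        Or.inl (Or.inr (Or.inl ⟨rfl, show (iF:ℕ) + 1 = (iF':ℕ) from by omega⟩))⟩
      simp only [ne_eq, Prod.mk.injEq]
      rintro ⟨h, -⟩
      rw [Fin.ext_iff] at h
      omega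
  obtain ⟨A, hApat⟩ := hA
  -- pigeonhole: two full columns paired by the twist
  have hpig : ∃ x ∈ Fcol.image Fin.val, ∃ y ∈ Fcol.image Fin.val,
      x ≠ y ∧ min x (2*m-1-x) = min y (2*m-1-y) := by
    have hmaps : ∀ x ∈ Fcol.image Fin.val, min x (2*m-1-x) ∈ Finset.range m := by
      intro x hx
      simp only [Finset.mem_image] at hx
      obtain ⟨v, -, rfl⟩ := hx
      have := v.isLt
      simp only [Finset.mem_range]
      omega
    have hlt : (Finset.range m).card < (Fcol.image Fin.val).card := by
      rw [Finset.card_range, hvalinj]; omega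
    exact Finset.exists_ne_map_eq_of_card_lt_of_maps_to hlt hmaps
  obtain ⟨x, hx, y, hy, hxy, hminxy⟩ := hpig
  simp only [Finset.mem_image] at hx hy
  obtain ⟨jx, hjx, hjxv⟩ := hx
  obtain ⟨jy, hjy, hjyv⟩ := hy
  simp only [hFcoldef, Finset.mem_filter] at hjx hjy
  have hxk : x < 2*m := by subst hjxv; have := jx.isLt; omega
  have hyk : y < 2*m := by subst hjyv; have := jy.isLt; omega
  have hyx : y = 2*m-1-x := by omega
  -- twist edges between columns jx and jy
  have twist : ∀ (p q : Fin k), (p.val : ℕ) = 0 → (q.val : ℕ) = 2*m-1 →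
      ¬((p, jx) ∈ I ∧ (q, jy) ∈ I) := by
    rintro p q hp hq ⟨hp1, hq1⟩
    refine hI _ hp1 _ hq1 ⟨?_, Or.inl (Or.inr (Or.inr (Or.inl
      ⟨hp, show (q:ℕ) = k - 1 from by omega,
        show (jx:ℕ) + (jy:ℕ) = k - 1 from by omega⟩)))⟩
    simp only [ne_eq, Prod.mk.injEq]
    rintro ⟨h, -⟩
    rw [Fin.ext_iff] at h
    omega
  have twist' : ∀ (p q : Fin k), (p.val : ℕ) = 0 → (q.val : ℕ) = 2*m-1 →
      ¬((p, jy) ∈ I ∧ (q, jx) ∈ I) := by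
    rintro p q hp hq ⟨hp1, hq1⟩
    refine hI _ hp1 _ hq1 ⟨?_, Or.inl (Or.inr (Or.inr (Or.inl
      ⟨hp, show (q:ℕ) = k - 1 from by omega,
        show (jy:ℕ) + (jx:ℕ) = k - 1 from by omega⟩)))⟩
    simp only [ne_eq, Prod.mk.injEq]
    rintro ⟨h, -⟩
    rw [Fin.ext_iff] at h
    omega
  -- both columns all-even or both all-odd
  have hcols : (∀ i < 2*m, (i ∈ colF I jx ↔ i % 2 = 0) ∧ (i ∈ colF I jy ↔ i % 2 = 0)) ∨
      (∀ i < 2*m, (i ∈ colF I jx ↔ i % 2 = 1) ∧ (i ∈ colF I jy ↔ i % 2 = 1)) := by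
    by_cases hc0 : (0:ℕ) ∈ colF I jx
    · left
      have hq : (2*m-1 : ℕ) ∉ colF I jy := by
        intro hmem
        exact twist P0 PL rfl rfl ⟨(mem_colF P0).mp hc0, (mem_colF PL).mp hmem⟩
      have hyev := pathEven m _ (hsubc' jy) (colF_nc hI jy) hjy.2 hm hq
      have h0y : (0:ℕ) ∈ colF I jy := (hyev 0 (by omega)).mpr rfl
      have hq' : (2*m-1 : ℕ) ∉ colF I jx := by
        intro hmem
        exact twist' P0 PL rfl rfl ⟨(mem_colF P0).mp h0y, (mem_colF PL).mp hmem⟩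
      have hxev := pathEven m _ (hsubc' jx) (colF_nc hI jx) hjx.2 hm hq'
      exact fun i hi => ⟨hxev i hi, hyev i hi⟩
    · right
      have hxodd := pathOdd m _ (hsubc' jx) (colF_nc hI jx) hjx.2 hc0
      have hLx : (2*m-1:ℕ) ∈ colF I jx := (hxodd (2*m-1) (by omega)).mpr (by omega)
      have h0y : (0:ℕ) ∉ colF I jy := by
        intro hmem
        exact twist' P0 PL rfl rfl ⟨(mem_colF P0).mp hmem, (mem_colF PL).mp hLx⟩
      have hyodd := pathOdd m _ (hsubc' jy) (colF_nc hI jy) hjy.2 h0y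
      exact fun i hi => ⟨hxodd i hi, hyodd i hi⟩
  -- final parity contradiction using row A
  have hAx : (jx.val ∈ rowF I A) ↔ (A, jx) ∈ I := mem_rowF jx
  have hAy : (jy.val ∈ rowF I A) ↔ (A, jy) ∈ I := mem_rowF jy
  have hAx' : (A.val ∈ colF I jx) ↔ (A, jx) ∈ I := mem_colF A
  have hAy' : (A.val ∈ colF I jy) ↔ (A, jy) ∈ I := mem_colF A
  have hAlt : (A:ℕ) < 2*m := by have := A.isLt; omega
  have e1 : (jx.val % 2 = 1) ↔ (A, jx) ∈ I := (hApat jx.val (by omega)).symm.trans hAx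
  have e2 : (jy.val % 2 = 1) ↔ (A, jy) ∈ I := (hApat jy.val (by omega)).symm.trans hAy
  rcases hcols with hev | hod
  · have f1 : ((A:ℕ) % 2 = 0) ↔ (A, jx) ∈ I := ((hev (A:ℕ) hAlt).1).symm.trans hAx'
    have f2 : ((A:ℕ) % 2 = 0) ↔ (A, jy) ∈ I := ((hev (A:ℕ) hAlt).2).symm.trans hAy'
    have g1 := e1.trans f1.symm
    have g2 := e2.trans f2.symm
    rw [hjxv] at g1
    rw [hjyv] at g2
    -- x and y have opposite parity
    omega
  · have f1 : ((A:ℕ) % 2 = 1) ↔ (A, jx) ∈ I := ((hod (A:ℕ) hAlt).1).symm.trans hAx'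
    have f2 : ((A:ℕ) % 2 = 1) ↔ (A, jy) ∈ I := ((hod (A:ℕ) hAlt).2).symm.trans hAy'
    have g1 := e1.trans f1.symm
    have g2 := e2.trans f2.symm
    rw [hjxv] at g1
    rw [hjyv] at g2
    omega

def IndSet (k : ℕ) : Finset (Fin k × Fin k) :=
  Finset.univ.filter (fun v =>
    (((v.1:ℕ)+(v.2:ℕ)) % 2 = 1 ∧ (v.1:ℕ)+(v.2:ℕ)+1 < k) ∨
    (((v.1:ℕ)+(v.2:ℕ)) % 2 = 0 ∧ k ≤ (v.1:ℕ)+(v.2:ℕ)))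

lemma IndSet_indep {k : ℕ} (hk : 2 ≤ k) (hkeven : Even k) :
    ∀ u ∈ IndSet k, ∀ v ∈ IndSet k, ¬(Gk k).Adj u v := by
  obtain ⟨m, hm⟩ := hkeven
  intro u hu v hv hadj
  simp only [IndSet, Finset.mem_filter, Finset.mem_univ, true_and] at hu hv
  obtain ⟨-, hrel⟩ := hadj
  have hu1 := u.1.isLt
  have hu2 := u.2.isLt
  have hv1 := v.1.isLt
  have hv2 := v.2.isLt
  unfold gkRel at hrel
  simp only [Fin.ext_iff] at hrel
  omega

lemma IndSet_card {k m : ℕ} (hm : 1 ≤ m) (hk : k = 2*m) :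
    (IndSet k).card = 2*m*m - m := by
  classical
  set L : Finset (Fin k × Fin k) := Finset.univ.filter (fun v => v.1 < v.2) with hL
  have hcardL : L.card = 2*m*m - m := by
    set L' : Finset (Fin k × Fin k) := Finset.univ.filter (fun v => v.2 < v.1) with hL'
    have h1 : L.card = L'.card := by
      apply Finset.card_bij (fun a _ => Prod.swap a)
      · intro a ha
        simp only [hL, hL', Finset.mem_filter, Finset.mem_univ, true_and] at *
        exact ha
      · intro a ha b hb hab
        exact Prod.swap_injective hab
      · intro b hb
        refine ⟨Prod.swap b, ?_, by simp⟩
        simp only [hL, hL', Finset.mem_filter, Finset.mem_univ, true_and] at *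
        exact hb
    have h2 : L.card + L'.card = k*k - k := by
      have hdisj : Disjoint L L' := by
        rw [Finset.disjoint_left]
        intro a ha ha'
        simp only [hL, hL', Finset.mem_filter] at ha ha'
        exact absurd ha'.2 (lt_asymm ha.2)
      have hunion : L ∪ L' = Finset.univ.filter (fun v : Fin k × Fin k => v.1 ≠ v.2) := by
        rw [hL, hL', ← Finset.filter_or]
        apply Finset.filter_congr
        intro v _
        simp only [ne_iff_lt_or_gt, gt_iff_lt]
      have hne : (Finset.univ.filter (fun v : Fin k × Fin k => v.1 ≠ v.2)).card = k*k - k := by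
        have hdiag : (Finset.univ.filter (fun v : Fin k × Fin k => v.1 = v.2)).card = k := by
          have himg : Finset.univ.filter (fun v : Fin k × Fin k => v.1 = v.2)
              = (Finset.univ : Finset (Fin k)).image (fun a => (a, a)) := by
            ext v
            constructor
            · intro h
              rw [Finset.mem_filter] at h
              rw [Finset.mem_image]
              exact ⟨v.1, Finset.mem_univ _, Prod.ext rfl h.2⟩
            · intro h
              rw [Finset.mem_image] at h
              obtain ⟨a, -, rfl⟩ := h
              simp
          rw [himg, Finset.card_image_of_injective _ (fun a b hab => (Prod.ext_iff.mp hab).1)]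
          simp
        have := Finset.card_filter_add_card_filter_not
          (s := (Finset.univ : Finset (Fin k × Fin k))) (p := fun v => v.1 = v.2)
        have huniv : (Finset.univ : Finset (Fin k × Fin k)).card = k*k := by
          simp [Fintype.card_prod]
        have heqf : Finset.univ.filter (fun v : Fin k × Fin k => v.1 ≠ v.2)
            = Finset.univ.filter (fun v : Fin k × Fin k => ¬(v.1 = v.2)) := rfl
        rw [heqf]
        omega
      rw [← Finset.card_union_of_disjoint hdisj, hunion, hne]
    have hkk : k*k = 4*(m*m) := by rw [hk]; ring
    have hnorm : 2*m*m = 2*(m*m) := by ring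
    omega
  -- bijection between L and IndSet k
  have h0k : 0 < k := by omega
  have hbij : L.card = (IndSet k).card := by
    apply Finset.card_bij (fun (v : Fin k × Fin k) _ =>
      if ((v.2:ℕ) - (v.1:ℕ)) % 2 = 0
      then ((v.1, ⟨k-1-(v.2:ℕ), by omega⟩) : Fin k × Fin k)
      else (v.2, ⟨k-1-(v.1:ℕ), by omega⟩))
    · intro a ha
      simp only [hL, Finset.mem_filter, Finset.mem_univ, true_and, Fin.lt_def] at ha
      have h1 := a.1.isLt
      have h2 := a.2.isLt
      split_ifs with hp
      · simp only [IndSet, Finset.mem_filter, Finset.mem_univ, true_and]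
        omega
      · simp only [IndSet, Finset.mem_filter, Finset.mem_univ, true_and]
        omega
    · intro a ha b hb hab
      simp only [hL, Finset.mem_filter, Finset.mem_univ, true_and, Fin.lt_def] at ha hb
      have ha1 := a.1.isLt
      have ha2 := a.2.isLt
      have hb1 := b.1.isLt
      have hb2 := b.2.isLt
      rw [Prod.ext_iff] at hab ⊢
      split_ifs at hab with h1 h2 h2 <;>
        simp only [Prod.ext_iff, Fin.ext_iff] at hab ⊢ <;> omega
    · intro b hb
      simp only [IndSet, Finset.mem_filter, Finset.mem_univ, true_and] at hb
      have hb1 := b.1.isLt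
      have hb2 := b.2.isLt
      rcases hb with ⟨hpar, hlt⟩ | ⟨hpar, hge⟩
      · -- region 1: preimage (b.1, rev b.2)
        refine ⟨(b.1, ⟨k-1-(b.2:ℕ), by omega⟩), ?_, ?_⟩
        · simp only [hL, Finset.mem_filter, Finset.mem_univ, true_and, Fin.lt_def]
          omega
        · have hcond : ((k-1-(b.2:ℕ)) - (b.1:ℕ)) % 2 = 0 := by omega
          rw [if_pos (by simpa using hcond)]
          exact Prod.ext rfl (Fin.ext (by simp only []; omega))
      · -- region 2: preimage (rev b.2, b.1)
        refine ⟨(⟨k-1-(b.2:ℕ), by omega⟩, b.1), ?_, ?_⟩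
        · simp only [hL, Finset.mem_filter, Finset.mem_univ, true_and, Fin.lt_def]
          omega
        · have hcond : ¬(((b.1:ℕ) - (k-1-(b.2:ℕ))) % 2 = 0) := by omega
          rw [if_neg (by simpa using hcond)]
          exact Prod.ext rfl (Fin.ext (by simp only []; omega))
  rw [hbij] at hcardL
  exact hcardL


theorem stmt_12 (k : ℕ) (hk : 2 ≤ k) (hkeven : Even k) :
    (∃ I : Finset (Fin k × Fin k), (∀ u ∈ I, ∀ v ∈ I, ¬(Gk k).Adj u v) ∧
        I.card = (k ^ 2 - k) / 2) ∧
      ∀ I : Finset (Fin k × Fin k), (∀ u ∈ I, ∀ v ∈ I, ¬(Gk k).Adj u v) →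
        I.card ≤ (k ^ 2 - k) / 2 := by
  obtain ⟨m, hm'⟩ := hkeven
  have hk2m : k = 2*m := by omega
  have hm1 : 1 ≤ m := by omega
  have hval : (k^2 - k)/2 = 2*m*m - m := by
    have h1 : k^2 = 2*(2*m*m) := by rw [hk2m]; ring
    omega
  rw [hval]
  constructor
  · exact ⟨IndSet k, IndSet_indep hk ⟨m, hm'⟩, IndSet_card hm1 hk2m⟩
  · intro I hI
    exact upper hm1 hk2m I hI
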